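/- Let I_u be independent Bernoulli random variables with P(I_u = 1) = p(u), where p(u) = 1 - (1 - Q(u))^{s} with Q(u) ∈ (0,1) and integer s ≥ 1. Suppose the coefficients satisfy a_u² ≤ M for all u ∈ V. Then Var(∑_{u ∈ V} (a_u / p(u)) I_u) ≤ M · ∑_{u ∈ V} (1/Q(u) - 1). -/

import Mathlib

open MeasureTheory ProbabilityTheory

/-- Variance bound for the subgraph-sampled estimator (single coordinate form of
Theorem 2 of PPSGCN): with independent Bernoulli `I u`, `P(I u = 1) = p u` where
`p u = 1 - (1 - Q u)^s`, `Q u ∈ (0,1)`, `s ≥ 1`, and coefficients with `(a u)^2 ≤ M`,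
we have `Var(∑ u, (a u / p u) * I u) ≤ M * ∑ u, (1 / Q u - 1)`. -/
theorem horvitz_thompson_variance_bound
    {Ω : Type*} [MeasurableSpace Ω] (μ : Measure Ω) [IsProbabilityMeasure μ]
    {V : Type*} [Fintype V]
    (I : V → Ω → ℝ) (Q p : V → ℝ) (a : V → ℝ) (M : ℝ)
    (s : ℕ) (hs : 1 ≤ s)
    (hQ0 : ∀ u, 0 < Q u) (hQ1 : ∀ u, Q u < 1)
    (hpdef : ∀ u, p u = 1 - (1 - Q u) ^ s)
    (hmeas : ∀ u, Measurable (I u))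
    (hBer : ∀ u, ∀ ω, I u ω = 0 ∨ I u ω = 1)
    (hprob : ∀ u, μ {ω | I u ω = 1} = ENNReal.ofReal (p u))
    (hindep : iIndepFun I μ)
    (ha : ∀ u, (a u) ^ 2 ≤ M) :
    variance (fun ω => ∑ u, (a u / p u) * I u ω) μ
      ≤ M * ∑ u, (1 / Q u - 1) := by
  classical
  have hQs : ∀ u, 0 < 1 - Q u := fun u => by linarith [hQ1 u]
  have hp0 : ∀ u, 0 < p u := by
    intro u
    rw [hpdef u]
    have : (1 - Q u) ^ s < 1 := pow_lt_one₀ (le_of_lt (hQs u)) (by linarith [hQ0 u]) (by omega)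
    linarith
  have hp1 : ∀ u, p u ≤ 1 := by
    intro u
    rw [hpdef u]
    have : 0 ≤ (1 - Q u) ^ s := pow_nonneg (le_of_lt (hQs u)) s
    linarith
  have hpQ : ∀ u, Q u ≤ p u := by
    intro u
    rw [hpdef u]
    have : (1 - Q u) ^ s ≤ 1 - Q u :=
      pow_le_of_le_one (le_of_lt (hQs u)) (by linarith [hQ0 u]) (by omega)
    linarith
  -- expected value of I u is p u
  have hEI : ∀ u, ∫ ω, I u ω ∂μ = p u := by
    intro u
    have hset : MeasurableSet {ω | I u ω = 1} := (hmeas u) (measurableSet_singleton 1)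
    have heq : I u = Set.indicator {ω | I u ω = 1} (fun _ => (1 : ℝ)) := by
      funext ω
      rcases hBer u ω with h | h
      · rw [h, Set.indicator_of_notMem]
        simp [Set.mem_setOf_eq, h]
      · rw [h, Set.indicator_of_mem]
        exact h
    rw [heq, integral_indicator_const _ hset, measureReal_def, hprob u]
    simp [ENNReal.toReal_ofReal (le_of_lt (hp0 u))]
  -- I u squared equals I u
  have hsq : ∀ u, (fun ω => I u ω ^ 2) = I u := by
    intro u; funext ω
    rcases hBer u ω with h | h <;> simp [h]
  -- Memℒp
  have hmem : ∀ u, MemLp (I u) 2 μ := by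
    intro u
    apply MemLp.of_bound ((hmeas u).aestronglyMeasurable) 1
    filter_upwards with ω
    rcases hBer u ω with h | h <;> simp [h]
  -- variance of I u
  have hvarI : ∀ u, variance (I u) μ = p u * (1 - p u) := by
    intro u
    rw [variance_eq_sub (hmem u)]
    simp only [Pi.pow_apply]
    have : ∫ ω, I u ω ^ 2 ∂μ = p u := by
      rw [show (fun ω => I u ω ^ 2) = I u from hsq u] at *
      exact hEI u
    rw [this, hEI u]
    ring
  set X : V → Ω → ℝ := fun u ω => (a u / p u) * I u ω with hX
  have hmemX : ∀ u, MemLp (X u) 2 μ := fun u => (hmem u).const_mul _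
  have hindepX : ∀ i j : V, i ≠ j → IndepFun (X i) (X j) μ := by
    intro i j hij
    have h := hindep.indepFun hij
    exact h.comp (measurable_const_mul (a i / p i)) (measurable_const_mul (a j / p j))
  have hvs : variance (fun ω => ∑ u, X u ω) μ = ∑ u, variance (X u) μ := by
    have := IndepFun.variance_sum (μ := μ) (X := X) (s := Finset.univ)
      (fun i _ => hmemX i) (fun i _ j _ hij => hindepX i j hij)
    rw [← this]
    congr 1
    funext ω
    simp [Finset.sum_apply]
  rw [show (fun ω => ∑ u, (a u / p u) * I u ω) = (fun ω => ∑ u, X u ω) from rfl, hvs]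
  have hbound : ∀ u, variance (X u) μ ≤ M * (1 / Q u - 1) := by
    intro u
    have : X u = (a u / p u) • I u := rfl
    rw [this, variance_smul, hvarI u]
    have hpu := hp0 u
    have h1 : (a u / p u) ^ 2 * (p u * (1 - p u)) = a u ^ 2 * ((1 - p u) / p u) := by
      field_simp
    rw [h1]
    have hM : 0 ≤ M := le_trans (sq_nonneg (a u)) (ha u)
    have hfrac : (1 - p u) / p u ≤ 1 / Q u - 1 := by
      have h2 : 1 / Q u - 1 = (1 - Q u) / Q u := by
        field_simp [ne_of_gt (hQ0 u)]
      rw [h2]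
      exact div_le_div₀ (le_of_lt (hQs u)) (by linarith [hpQ u]) (hQ0 u) (hpQ u)
    have hfracnn : 0 ≤ (1 - p u) / p u := div_nonneg (by linarith [hp1 u]) (le_of_lt hpu)
    calc a u ^ 2 * ((1 - p u) / p u) ≤ M * ((1 - p u) / p u) :=
          mul_le_mul_of_nonneg_right (ha u) hfracnn
      _ ≤ M * (1 / Q u - 1) := mul_le_mul_of_nonneg_left hfrac hM
  calc ∑ u, variance (X u) μ ≤ ∑ u, M * (1 / Q u - 1) :=
        Finset.sum_le_sum fun u _ => hbound u
    _ = M * ∑ u, (1 / Q u - 1) := by rw [Finset.mul_sum]
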